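/- Let c, d ∈ ℝ. If q : (0, ∞) → ℝ is twice continuously differentiable and satisfies x² q''(x) + (c x + d) q'(x) − (a x + b) q(x) = 0, and u(x) := exp(−d/x) x^{c−2} q(x), then u satisfies x² u''(x) + ((4 − c) x − d) u'(x) − (a x + b + c − 2) u(x) = 0 on (0, ∞). -/

import Mathlib

open Set Real

/-- the gauge transformation `u(x) = e^{−d/x} x^{c−2} q(x)` of a solution of
`x² q'' + (cx+d) q' − (ax+b) q = 0` satisfies
`x² u'' + ((4−c)x − d) u' − (ax + b + c − 2) u = 0` on `(0,∞)`. -/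
theorem stmt_10 (a b c d : ℝ) (q : ℝ → ℝ)
    (hq : ContDiffOn ℝ 2 q (Ioi (0:ℝ)))
    (hode : ∀ x ∈ Ioi (0:ℝ),
      x ^ 2 * deriv (deriv q) x + (c * x + d) * deriv q x - (a * x + b) * q x = 0)
    (u : ℝ → ℝ)
    (hu : ∀ x ∈ Ioi (0:ℝ), u x = Real.exp (-(d / x)) * x ^ (c - 2) * q x) :
    ∀ x ∈ Ioi (0:ℝ),
      x ^ 2 * deriv (deriv u) x + ((4 - c) * x - d) * deriv u x
        - (a * x + b + c - 2) * u x = 0 := by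
  -- abbreviations
  set w : ℝ → ℝ := fun y => Real.exp (-(d / y)) * y ^ (c - 2) with hwdef
  set g : ℝ → ℝ := fun y => d / y ^ 2 + (c - 2) / y with hgdef
  -- first derivative of q
  have hqd : ∀ y ∈ Ioi (0:ℝ), HasDerivAt q (deriv q y) y := by
    intro y hy
    have h2 : ContDiffAt ℝ 2 q y := hq.contDiffAt (Ioi_mem_nhds hy)
    exact (h2.differentiableAt (by norm_num)).hasDerivAt
  -- second derivative of q
  have hq1d : ∀ y ∈ Ioi (0:ℝ), HasDerivAt (deriv q) (deriv (deriv q) y) y := by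
    intro y hy
    have h2 : ContDiffAt ℝ 2 q y := hq.contDiffAt (Ioi_mem_nhds hy)
    have h3 : ContDiffAt ℝ 1 (fderiv ℝ q) y := h2.fderiv_right (by norm_num)
    have h4 : ContDiffAt ℝ 1 (fun z => fderiv ℝ q z 1) y := h3.clm_apply contDiffAt_const
    have h5 : DifferentiableAt ℝ (fun z => fderiv ℝ q z 1) y :=
      h4.differentiableAt (by norm_num)
    have h6 : deriv q = fun z => fderiv ℝ q z 1 := rfl
    rw [h6]
    exact h5.hasDerivAt
  -- derivative of w
  have hwd : ∀ y ∈ Ioi (0:ℝ), HasDerivAt w (w y * g y) y := by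
    intro y hy
    have hy0 : (0:ℝ) < y := hy
    have h1 : HasDerivAt (fun z : ℝ => -(d / z)) (d / y ^ 2) y := by
      have h := (hasDerivAt_inv hy0.ne').const_mul (-d)
      have heq : (fun z : ℝ => -(d / z)) = fun z : ℝ => -d * z⁻¹ := by
        funext z; ring
      rw [heq]
      refine h.congr_deriv ?_
      field_simp
    have hexp : HasDerivAt (fun z : ℝ => Real.exp (-(d / z)))
        (Real.exp (-(d / y)) * (d / y ^ 2)) y := by
      simpa [mul_comm] using h1.exp
    have hr : HasDerivAt (fun z : ℝ => z ^ (c - 2)) ((c - 2) * y ^ (c - 2 - 1)) y :=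
      Real.hasDerivAt_rpow_const (Or.inl hy0.ne')
    have h := hexp.mul hr
    refine (h : HasDerivAt w _ y).congr_deriv ?_
    rw [Real.rpow_sub_one hy0.ne']
    simp only [hwdef, hgdef]
    field_simp
  -- first derivative of u on Ioi 0
  have hud : ∀ y ∈ Ioi (0:ℝ), deriv u y = w y * (g y * q y + deriv q y) := by
    intro y hy
    have heq : u =ᶠ[nhds y] fun z => w z * q z := by
      filter_upwards [Ioi_mem_nhds hy] with z hz
      rw [hu z hz]
    rw [heq.deriv_eq]
    have h := ((hwd y hy).mul (hqd y hy)).deriv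
    rw [show (fun z => w z * q z) = w * q from rfl, h]; ring
  intro x hx
  have hx0 : (0:ℝ) < x := hx
  have hxne : x ≠ 0 := hx0.ne'
  -- derivative of g at x
  have hgd : HasDerivAt g (-(2 * d) / x ^ 3 - (c - 2) / x ^ 2) x := by
    have h1 : HasDerivAt (fun z : ℝ => d / z ^ 2) (-(2 * d) / x ^ 3) x := by
      have hp : HasDerivAt (fun z : ℝ => z ^ 2) ((2 : ℕ) * x ^ (2 - 1)) x := hasDerivAt_pow 2 x
      have h := (hp.inv (pow_ne_zero 2 hxne)).const_mul d
      have heq : (fun z : ℝ => d / z ^ 2) = fun z : ℝ => d * (z ^ 2)⁻¹ := by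
        funext z; ring
      rw [heq]
      refine h.congr_deriv ?_
      field_simp
      ring
    have h2 : HasDerivAt (fun z : ℝ => (c - 2) / z) (-(c - 2) / x ^ 2) x := by
      have h := (hasDerivAt_inv hxne).const_mul (c - 2)
      have heq : (fun z : ℝ => (c - 2) / z) = fun z : ℝ => (c - 2) * z⁻¹ := by
        funext z; ring
      rw [heq]
      refine h.congr_deriv ?_
      field_simp
    have h := h1.add h2
    have hval : -(2 * d) / x ^ 3 - (c - 2) / x ^ 2
        = -(2 * d) / x ^ 3 + -(c - 2) / x ^ 2 := by ring
    rw [hval]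
    exact h
  -- second derivative of u at x
  have hF1 : HasDerivAt (fun z => w z * (g z * q z + deriv q z))
      (w x * g x * (g x * q x + deriv q x) +
        w x * ((-(2 * d) / x ^ 3 - (c - 2) / x ^ 2) * q x + g x * deriv q x
          + deriv (deriv q) x)) x :=
    (hwd x hx).mul ((hgd.mul (hqd x hx)).add (hq1d x hx))
  have E2 : deriv (deriv u) x =
      w x * g x * (g x * q x + deriv q x) +
        w x * ((-(2 * d) / x ^ 3 - (c - 2) / x ^ 2) * q x + g x * deriv q x
          + deriv (deriv q) x) := by
    have heq : deriv u =ᶠ[nhds x] fun z => w z * (g z * q z + deriv q z) := by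
      filter_upwards [Ioi_mem_nhds hx] with z hz using hud z hz
    rw [heq.deriv_eq]
    exact hF1.deriv
  -- conclude
  have hode' := hode x hx
  have hq2 : deriv (deriv q) x = ((a * x + b) * q x - (c * x + d) * deriv q x) / x ^ 2 := by
    field_simp
    linarith
  rw [E2, hud x hx, hu x hx, hq2]
  have hux : Real.exp (-(d / x)) * x ^ (c - 2) = w x := rfl
  rw [hux]
  simp only [hgdef]
  field_simp
  ring
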